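/- arXiv:1807.05552 — 3 statements merged into one kernel-verified Lean document; each statement's English description precedes it below -/
import Mathlib

section
/- Let b > 1, r ≥ 0, f ∈ C^{r,1}([0,1]), and let L_m^0, L_m^1 (0 ≤ m ≤ r) be continuation basis functions as in the framework. Let 0 ≤ s ≤ r and let F̂ be a 2×(r+1) real matrix that is s-exact with respect to f, and let f̂_c : [1−b,1] → ℝ be the approximate continuation (f̂_c = f on [0,1] and f̂_c = L_r(F̂) on [1−b,0)). Then f̂_c is s-times continuously differentiable on [1−b,1], its s-th derivative is Lipschitz continuous on [1−b,1], and f̂_c^{(ℓ)}(1−b) = f̂_c^{(ℓ)}(1) for all 0 ≤ ℓ ≤ s. -/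
open MeasureTheory Real Set

noncomputable section

/-- The class `C^{r,1}([lo,hi])`: `r`-times continuously differentiable with
Lipschitz continuous `r`-th derivative. -/
def Cr1 (r : ℕ) (lo hi : ℝ) (f : ℝ → ℝ) : Prop :=
  ContDiffOn ℝ r f (Icc lo hi) ∧
    ∃ K : NNReal, LipschitzOnWith K (iteratedDerivWithin r f (Icc lo hi)) (Icc lo hi)

/-- The continuation operator `L_r` applied to a boundary-data matrix, built from
basis functions `L0 m` and `L1 m`. -/
def contOp (r : ℕ) (L0 L1 : ℕ → ℝ → ℝ) (A : Fin 2 → Fin (r + 1) → ℝ) (x : ℝ) : ℝ :=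
  ∑ m : Fin (r + 1), A 0 m * L0 (m : ℕ) x + ∑ m : Fin (r + 1), A 1 m * L1 (m : ℕ) x

/-- The exact boundary data matrix `F` of `f`: `F j m = f^{(m)}(j)` for `j ∈ {0,1}`. -/
def Fmat (r : ℕ) (f : ℝ → ℝ) : Fin 2 → Fin (r + 1) → ℝ :=
  fun j m => iteratedDerivWithin (m : ℕ) f (Icc (0 : ℝ) 1) ((j : ℕ) : ℝ)

/-- `A` is `s`-exact with respect to `B`: columns `0` through `s` agree. -/
def sExact (r s : ℕ) (A B : Fin 2 → Fin (r + 1) → ℝ) : Prop :=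
  ∀ j : Fin 2, ∀ m : Fin (r + 1), (m : ℕ) ≤ s → A j m = B j m

/-- The (approximate) continuation of `f`, equal to `f` on `[0,1]` (i.e. for `0 ≤ x`)
and to the continuation polynomial/operator value `g x` for `x < 0`. -/
def extCont (f g : ℝ → ℝ) : ℝ → ℝ := fun x => if 0 ≤ x then f x else g x


lemma myIDW_sum {ι : Type*} (t : Finset ι) (u : ι → ℝ → ℝ) (n : ℕ)
    {s : Set ℝ} (hs : UniqueDiffOn ℝ s) {x : ℝ} (hx : x ∈ s)
    (hu : ∀ i ∈ t, ContDiffOn ℝ n (u i) s) :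
    iteratedDerivWithin n (fun y => ∑ i ∈ t, u i y) s x
      = ∑ i ∈ t, iteratedDerivWithin n (u i) s x := by
  classical
  induction t using Finset.induction_on with
  | empty =>
      simp only [Finset.sum_empty]
      simp [iteratedDerivWithin, iteratedFDerivWithin_zero_fun]
  | insert a t' hnot ih =>
      rw [Finset.sum_insert hnot]
      have h1 : ContDiffOn ℝ n (u a) s := hu a (Finset.mem_insert_self a t')
      have h2 : ContDiffOn ℝ n (fun y => ∑ i ∈ t', u i y) s :=
        ContDiffOn.sum fun i hi => hu i (Finset.mem_insert_of_mem hi)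
      have hadd := iteratedDerivWithin_add hx hs (h1 x hx) (h2 x hx)
      have : (fun y => u a y + ∑ i ∈ t', u i y)
          = (u a + fun y => ∑ i ∈ t', u i y) := rfl
      rw [show (fun y => u a y + ∑ i ∈ t', u i y)
          = (u a + fun y => ∑ i ∈ t', u i y) from rfl] at *
      rw [show (fun y => ∑ i ∈ insert a t', u i y)
          = (u a + fun y => ∑ i ∈ t', u i y) from by
        funext y; simp [Finset.sum_insert hnot]]
      rw [hadd, ih (fun i hi => hu i (Finset.mem_insert_of_mem hi))]

lemma myLip_congr {u v : ℝ → ℝ} {s : Set ℝ} {K : NNReal}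
    (h : LipschitzOnWith K u s) (he : Set.EqOn v u s) : LipschitzOnWith K v s :=
  fun x hx y hy => by rw [he hx, he hy]; exact h hx hy

lemma myLip_const_mul {u : ℝ → ℝ} {s : Set ℝ} {K : NNReal} (c : ℝ)
    (h : LipschitzOnWith K u s) : LipschitzOnWith (‖c‖₊ * K) (fun x => c * u x) s := by
  rw [lipschitzOnWith_iff_dist_le_mul] at h ⊢
  intro x hx y hy
  have : dist (c * u x) (c * u y) = ‖c‖ * dist (u x) (u y) := by
    simp [Real.dist_eq, ← mul_sub, abs_mul]
  rw [this]
  calc ‖c‖ * dist (u x) (u y) ≤ ‖c‖ * (K * dist x y) := by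
        exact mul_le_mul_of_nonneg_left (h x hx y hy) (norm_nonneg c)
    _ = ↑(‖c‖₊ * K) * dist x y := by push_cast; ring

lemma myLip_sum {ι : Type*} (t : Finset ι) (u : ι → ℝ → ℝ) (K : ι → NNReal)
    {s : Set ℝ} (h : ∀ i ∈ t, LipschitzOnWith (K i) (u i) s) :
    LipschitzOnWith (∑ i ∈ t, K i) (fun x => ∑ i ∈ t, u i x) s := by
  classical
  induction t using Finset.induction_on with
  | empty => simp [LipschitzOnWith]
  | insert a t' hnot ih =>
      rw [lipschitzOnWith_iff_dist_le_mul]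
      intro x hx y hy
      have h1 := (h a (Finset.mem_insert_self a _))
      have h2 := ih (fun i hi => h i (Finset.mem_insert_of_mem hi))
      rw [lipschitzOnWith_iff_dist_le_mul] at h1 h2
      simp only [Finset.sum_insert hnot]
      calc dist (u a x + ∑ i ∈ t', u i x) (u a y + ∑ i ∈ t', u i y)
          ≤ dist (u a x) (u a y) + dist (∑ i ∈ t', u i x) (∑ i ∈ t', u i y) :=
            dist_add_add_le _ _ _ _
        _ ≤ K a * dist x y + (∑ i ∈ t', K i) * dist x y :=
            add_le_add (h1 x hx y hy) (h2 x hx y hy)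
        _ = ↑(K a + ∑ i ∈ t', K i) * dist x y := by push_cast; ring

/-- Glue two Lipschitz functions at 0. -/
lemma myLip_glue {u v : ℝ → ℝ} {a c : ℝ} {K1 K2 : NNReal}
    (h1 : LipschitzOnWith K1 u (Icc a 0)) (h2 : LipschitzOnWith K2 v (Icc 0 c))
    (h0 : v 0 = u 0) :
    LipschitzOnWith (K1 + K2) (fun x => if 0 ≤ x then v x else u x) (Icc a c) := by
  rw [lipschitzOnWith_iff_dist_le_mul] at h1 h2 ⊢
  have key : ∀ x ∈ Icc a c, ∀ y ∈ Icc a c, ¬ 0 ≤ x → 0 ≤ y →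
      dist (u x) (v y) ≤ ↑(K1 + K2) * dist x y := by
    intro x hx y hy hxn hy0
    have hx0 : x ≤ 0 := le_of_not_ge hxn
    have hxm : x ∈ Icc a 0 := ⟨hx.1, hx0⟩
    have hym : y ∈ Icc 0 c := ⟨hy0, hy.2⟩
    have h0m : (0:ℝ) ∈ Icc a 0 := ⟨le_trans hx.1 hx0, le_rfl⟩
    have h0p : (0:ℝ) ∈ Icc 0 c := ⟨le_rfl, le_trans hy0 hy.2⟩
    have d1 : dist (u x) (v y) ≤ dist (u x) (u 0) + dist (v 0) (v y) := by
      rw [h0]; exact dist_triangle _ _ _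
    have e1 : dist x 0 ≤ dist x y := by
      rw [Real.dist_eq, Real.dist_eq]
      rw [abs_of_nonpos (by linarith), abs_of_nonpos (by linarith)]
      linarith
    have e2 : dist (0:ℝ) y ≤ dist x y := by
      rw [Real.dist_eq, Real.dist_eq]
      rw [abs_of_nonpos (by linarith), abs_of_nonpos (by linarith)]
      linarith
    calc dist (u x) (v y) ≤ dist (u x) (u 0) + dist (v 0) (v y) := d1
      _ ≤ K1 * dist x 0 + K2 * dist (0:ℝ) y :=
          add_le_add (h1 x hxm 0 h0m) (h2 0 h0p y hym)
      _ ≤ K1 * dist x y + K2 * dist x y := by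
          refine add_le_add ?_ ?_
          · exact mul_le_mul_of_nonneg_left e1 K1.coe_nonneg
          · exact mul_le_mul_of_nonneg_left e2 K2.coe_nonneg
      _ = ↑(K1 + K2) * dist x y := by push_cast; ring
  intro x hx y hy
  by_cases hx0 : 0 ≤ x <;> by_cases hy0 : 0 ≤ y
  · simp only [if_pos hx0, if_pos hy0]
    calc dist (v x) (v y) ≤ K2 * dist x y := h2 x ⟨hx0, hx.2⟩ y ⟨hy0, hy.2⟩
      _ ≤ ↑(K1 + K2) * dist x y := by
        push_cast
        exact mul_le_mul_of_nonneg_right (by simp) dist_nonneg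
  · simp only [if_pos hx0, if_neg hy0]
    rw [dist_comm, dist_comm x y]
    exact key y hy x hx hy0 hx0
  · simp only [if_neg hx0, if_pos hy0]
    exact key x hx y hy hx0 hy0
  · simp only [if_neg hx0, if_neg hy0]
    calc dist (u x) (u y) ≤ K1 * dist x y :=
        h1 x ⟨hx.1, le_of_not_ge hx0⟩ y ⟨hy.1, le_of_not_ge hy0⟩
      _ ≤ ↑(K1 + K2) * dist x y := by
        push_cast
        exact mul_le_mul_of_nonneg_right (by simp) dist_nonneg

/-- A `C^{r,1}` function has Lipschitz `s`-th derivative for all `s ≤ r`. -/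
lemma myCr1_lip {lo hi : ℝ} (hlh : lo < hi) {r s : ℕ} {f : ℝ → ℝ}
    (hC : ContDiffOn ℝ r f (Icc lo hi))
    (hL : ∃ K : NNReal, LipschitzOnWith K (iteratedDerivWithin r f (Icc lo hi)) (Icc lo hi))
    (hs : s ≤ r) :
    ∃ K : NNReal, LipschitzOnWith K (iteratedDerivWithin s f (Icc lo hi)) (Icc lo hi) := by
  rcases eq_or_lt_of_le hs with rfl | hlt
  · exact hL
  have hud : UniqueDiffOn ℝ (Icc lo hi) := uniqueDiffOn_Icc hlh
  have hdiff : DifferentiableOn ℝ (iteratedDerivWithin s f (Icc lo hi)) (Icc lo hi) :=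
    hC.differentiableOn_iteratedDerivWithin (by exact_mod_cast hlt) hud
  have hcont : ContinuousOn (iteratedDerivWithin (s+1) f (Icc lo hi)) (Icc lo hi) :=
    ((contDiffOn_nat_iff_continuousOn_differentiableOn_deriv hud).mp hC).1 (s+1) hlt
  obtain ⟨C, hCb⟩ := isCompact_Icc.exists_bound_of_continuousOn hcont
  refine ⟨C.toNNReal, Convex.lipschitzOnWith_of_nnnorm_derivWithin_le (convex_Icc lo hi) hdiff ?_⟩
  intro x hx
  rw [← iteratedDerivWithin_succ]
  have hb := hCb x hx
  rw [← NNReal.coe_le_coe, coe_nnnorm,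
    Real.coe_toNNReal C (le_trans (norm_nonneg _) hb)]
  exact hb

lemma myLip_add {u v : ℝ → ℝ} {s : Set ℝ} {K1 K2 : NNReal}
    (h1 : LipschitzOnWith K1 u s) (h2 : LipschitzOnWith K2 v s) :
    LipschitzOnWith (K1 + K2) (fun x => u x + v x) s := by
  rw [lipschitzOnWith_iff_dist_le_mul] at h1 h2 ⊢
  intro x hx y hy
  calc dist (u x + v x) (u y + v y) ≤ dist (u x) (u y) + dist (v x) (v y) :=
      dist_add_add_le _ _ _ _
    _ ≤ K1 * dist x y + K2 * dist x y := add_le_add (h1 x hx y hy) (h2 x hx y hy)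
    _ = ↑(K1 + K2) * dist x y := by push_cast; ring

/-- If `F̂` is `s`-exact with respect to `f ∈ C^{r,1}([0,1])`, then the approximate
continuation `f̂_c` belongs to `C_0^{s,1}([1-b,1])`: it is `s`-times continuously
differentiable with Lipschitz `s`-th derivative, and derivatives up to order `s`
match at the endpoints `1-b` and `1`. -/
theorem approx_continuation_regularity (b : ℝ) (hb : 1 < b) (r : ℕ) (f : ℝ → ℝ)
    (hf : Cr1 r 0 1 f)
    (L0 L1 : ℕ → ℝ → ℝ)
    (hL0 : ∀ m ≤ r, Cr1 r (1 - b) 0 (L0 m))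
    (hL1 : ∀ m ≤ r, Cr1 r (1 - b) 0 (L1 m))
    (hd00 : ∀ m ≤ r, ∀ ℓ ≤ r,
      iteratedDerivWithin ℓ (L0 m) (Icc (1 - b) 0) 0 = if ℓ = m then 1 else 0)
    (hd0b : ∀ m ≤ r, ∀ ℓ ≤ r,
      iteratedDerivWithin ℓ (L0 m) (Icc (1 - b) 0) (1 - b) = 0)
    (hd10 : ∀ m ≤ r, ∀ ℓ ≤ r,
      iteratedDerivWithin ℓ (L1 m) (Icc (1 - b) 0) 0 = 0)
    (hd1b : ∀ m ≤ r, ∀ ℓ ≤ r,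
      iteratedDerivWithin ℓ (L1 m) (Icc (1 - b) 0) (1 - b) = if ℓ = m then 1 else 0)
    (s : ℕ) (hs : s ≤ r)
    (Fh : Fin 2 → Fin (r + 1) → ℝ) (hex : sExact r s Fh (Fmat r f)) :
    ContDiffOn ℝ s (extCont f (contOp r L0 L1 Fh)) (Icc (1 - b) 1) ∧
    (∃ K : NNReal, LipschitzOnWith K
      (iteratedDerivWithin s (extCont f (contOp r L0 L1 Fh)) (Icc (1 - b) 1))
      (Icc (1 - b) 1)) ∧
    ∀ ℓ ≤ s, iteratedDerivWithin ℓ (extCont f (contOp r L0 L1 Fh)) (Icc (1 - b) 1) (1 - b)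
      = iteratedDerivWithin ℓ (extCont f (contOp r L0 L1 Fh)) (Icc (1 - b) 1) 1 := by
  have hb0 : (1 : ℝ) - b < 0 := by linarith
  have hbI : (1 : ℝ) - b < 1 := by linarith
  set g : ℝ → ℝ := contOp r L0 L1 Fh with hgdef
  set Im : Set ℝ := Icc (1 - b) 0 with hImdef
  set Ip : Set ℝ := Icc (0:ℝ) 1 with hIpdef
  set I : Set ℝ := Icc (1 - b) 1 with hIdef
  have hudm : UniqueDiffOn ℝ Im := uniqueDiffOn_Icc hb0
  have hudp : UniqueDiffOn ℝ Ip := uniqueDiffOn_Icc one_pos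
  have hudI : UniqueDiffOn ℝ I := uniqueDiffOn_Icc hbI
  have hunion : Im ∪ Ip = I := Icc_union_Icc_eq_Icc (le_of_lt hb0) zero_le_one
  have hmemr : ∀ m : Fin (r+1), (m : ℕ) ≤ r := fun m => Nat.lt_succ_iff.mp m.isLt
  have h0m : (0:ℝ) ∈ Im := ⟨le_of_lt hb0, le_rfl⟩
  have h0p : (0:ℝ) ∈ Ip := ⟨le_rfl, zero_le_one⟩
  have hbm : (1-b:ℝ) ∈ Im := ⟨le_rfl, le_of_lt hb0⟩
  have h1p : (1:ℝ) ∈ Ip := ⟨zero_le_one, le_rfl⟩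
  -- smoothness of g
  have hgC : ContDiffOn ℝ r g Im := by
    apply ContDiffOn.add
    · exact ContDiffOn.sum fun m _ => contDiffOn_const.mul (hL0 m (hmemr m)).1
    · exact ContDiffOn.sum fun m _ => contDiffOn_const.mul (hL1 m (hmemr m)).1
  -- derivative formula for g
  have hgD : ∀ ℓ : ℕ, ℓ ≤ r → ∀ x ∈ Im, iteratedDerivWithin ℓ g Im x =
      ∑ m : Fin (r+1), Fh 0 m * iteratedDerivWithin ℓ (L0 (m:ℕ)) Im x
      + ∑ m : Fin (r+1), Fh 1 m * iteratedDerivWithin ℓ (L1 (m:ℕ)) Im x := by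
    intro ℓ hℓ x hx
    have hcast : (ℓ : ℕ∞) ≤ (r : ℕ∞) := by exact_mod_cast hℓ
    have hc0 : ∀ m : Fin (r+1), ContDiffOn ℝ ℓ (L0 (m:ℕ)) Im :=
      fun m => ((hL0 m (hmemr m)).1).of_le (by exact_mod_cast hcast)
    have hc1 : ∀ m : Fin (r+1), ContDiffOn ℝ ℓ (L1 (m:ℕ)) Im :=
      fun m => ((hL1 m (hmemr m)).1).of_le (by exact_mod_cast hcast)
    have hS0 : ContDiffOn ℝ ℓ (fun y => ∑ m : Fin (r+1), Fh 0 m * L0 (m:ℕ) y) Im :=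
      ContDiffOn.sum fun m _ => contDiffOn_const.mul (hc0 m)
    have hS1 : ContDiffOn ℝ ℓ (fun y => ∑ m : Fin (r+1), Fh 1 m * L1 (m:ℕ) y) Im :=
      ContDiffOn.sum fun m _ => contDiffOn_const.mul (hc1 m)
    have hadd := iteratedDerivWithin_add (f := fun y => ∑ m : Fin (r+1), Fh 0 m * L0 (m:ℕ) y)
      (g := fun y => ∑ m : Fin (r+1), Fh 1 m * L1 (m:ℕ) y) hx hudm (hS0 x hx) (hS1 x hx)
    have hrw : iteratedDerivWithin ℓ g Im x
        = iteratedDerivWithin ℓ ((fun y => ∑ m : Fin (r+1), Fh 0 m * L0 (m:ℕ) y)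
            + (fun y => ∑ m : Fin (r+1), Fh 1 m * L1 (m:ℕ) y)) Im x := rfl
    rw [hrw, hadd,
      myIDW_sum Finset.univ (fun (m : Fin (r+1)) y => Fh 0 m * L0 (m:ℕ) y) ℓ hudm hx
        (fun m _ => contDiffOn_const.mul (hc0 m)),
      myIDW_sum Finset.univ (fun (m : Fin (r+1)) y => Fh 1 m * L1 (m:ℕ) y) ℓ hudm hx
        (fun m _ => contDiffOn_const.mul (hc1 m))]
    congr 1
    · exact Finset.sum_congr rfl fun m _ => iteratedDerivWithin_const_mul hx hudm _ (hc0 m x hx)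
    · exact Finset.sum_congr rfl fun m _ => iteratedDerivWithin_const_mul hx hudm _ (hc1 m x hx)
  -- boundary values of derivatives of g
  have hsum0 : ∀ ℓ : ℕ, ∀ hℓ : ℓ < r + 1, ∀ c : Fin (r+1) → ℝ,
      (∑ m : Fin (r+1), c m * (if ℓ = (m:ℕ) then (1:ℝ) else 0)) = c ⟨ℓ, hℓ⟩ := by
    intro ℓ hℓ c
    rw [Fintype.sum_eq_single (⟨ℓ, hℓ⟩ : Fin (r+1))]
    · simp
    · intro m hm
      rw [if_neg fun hc => hm (Fin.ext hc.symm), mul_zero]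
  have kg0 : ∀ ℓ : ℕ, ∀ hℓ' : ℓ < r + 1, iteratedDerivWithin ℓ g Im 0 = Fh 0 ⟨ℓ, hℓ'⟩ := by
    intro ℓ hℓ'
    have hℓ : ℓ ≤ r := Nat.lt_succ_iff.mp hℓ'
    rw [hgD ℓ hℓ 0 h0m]
    have e0 : ∀ m : Fin (r+1),
        Fh 0 m * iteratedDerivWithin ℓ (L0 (m:ℕ)) Im 0
          = Fh 0 m * (if ℓ = (m:ℕ) then (1:ℝ) else 0) := by
      intro m; rw [hd00 (m:ℕ) (hmemr m) ℓ hℓ]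
    have e1 : ∀ m : Fin (r+1),
        Fh 1 m * iteratedDerivWithin ℓ (L1 (m:ℕ)) Im 0 = 0 := by
      intro m; rw [hd10 (m:ℕ) (hmemr m) ℓ hℓ, mul_zero]
    rw [Finset.sum_congr rfl fun m _ => e0 m, Finset.sum_congr rfl fun m _ => e1 m,
      Finset.sum_const_zero, add_zero, hsum0 ℓ hℓ']
  have kgb : ∀ ℓ : ℕ, ∀ hℓ' : ℓ < r + 1, iteratedDerivWithin ℓ g Im (1-b) = Fh 1 ⟨ℓ, hℓ'⟩ := by
    intro ℓ hℓ'
    have hℓ : ℓ ≤ r := Nat.lt_succ_iff.mp hℓ'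
    rw [hgD ℓ hℓ (1-b) hbm]
    have e0 : ∀ m : Fin (r+1),
        Fh 0 m * iteratedDerivWithin ℓ (L0 (m:ℕ)) Im (1-b) = 0 := by
      intro m; rw [hd0b (m:ℕ) (hmemr m) ℓ hℓ, mul_zero]
    have e1 : ∀ m : Fin (r+1),
        Fh 1 m * iteratedDerivWithin ℓ (L1 (m:ℕ)) Im (1-b)
          = Fh 1 m * (if ℓ = (m:ℕ) then (1:ℝ) else 0) := by
      intro m; rw [hd1b (m:ℕ) (hmemr m) ℓ hℓ]
    rw [Finset.sum_congr rfl fun m _ => e0 m, Finset.sum_congr rfl fun m _ => e1 m,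
      Finset.sum_const_zero, zero_add, hsum0 ℓ hℓ']
  have key0 : ∀ ℓ : ℕ, ℓ ≤ s → iteratedDerivWithin ℓ g Im 0 = iteratedDerivWithin ℓ f Ip 0 := by
    intro ℓ hℓ
    rw [kg0 ℓ (by omega), hex 0 ⟨ℓ, by omega⟩ hℓ]
    simp [Fmat, hIpdef]
  have keyb : ∀ ℓ : ℕ, ℓ ≤ s → iteratedDerivWithin ℓ g Im (1-b) = iteratedDerivWithin ℓ f Ip 1 := by
    intro ℓ hℓ
    rw [kgb ℓ (by omega), hex 1 ⟨ℓ, by omega⟩ hℓ]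
    simp [Fmat, hIpdef]
  -- the glued derivative candidates
  set φ : ℕ → ℝ → ℝ := fun n x =>
    if 0 ≤ x then iteratedDerivWithin n f Ip x else iteratedDerivWithin n g Im x with hφdef
  have hφp : ∀ n, Set.EqOn (φ n) (iteratedDerivWithin n f Ip) Ip :=
    fun n x hx => if_pos hx.1
  have hφm : ∀ n, n ≤ s → Set.EqOn (φ n) (iteratedDerivWithin n g Im) Im := by
    intro n hn x hx
    by_cases hx0 : 0 ≤ x
    · have hx00 : x = 0 := le_antisymm hx.2 hx0
      subst hx00
      simp only [hφdef, if_pos (le_refl (0:ℝ))]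
      exact (key0 n hn).symm
    · exact if_neg hx0
  have hφ0 : ∀ x, φ 0 x = extCont f g x := by
    intro x
    simp only [hφdef, extCont, iteratedDerivWithin_zero]
  -- φ n has derivative φ (n+1) within I
  have hder : ∀ n, n < s → ∀ x ∈ I, HasDerivWithinAt (φ n) (φ (n+1) x) I x := by
    intro n hn x hx
    rw [← hunion]
    apply HasDerivWithinAt.union
    · by_cases hxm : x ∈ Im
      · have hdiff : DifferentiableWithinAt ℝ (iteratedDerivWithin n g Im) Im x :=
          hgC.differentiableOn_iteratedDerivWithin
            (by exact_mod_cast lt_of_lt_of_le hn hs) hudm x hxm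
        have h1 : HasDerivWithinAt (iteratedDerivWithin n g Im)
            (iteratedDerivWithin (n+1) g Im x) Im x := by
          have h2 := hdiff.hasDerivWithinAt
          rwa [← iteratedDerivWithin_succ] at h2
        have e := hφm (n+1) hn hxm
        rw [e]
        exact h1.congr (hφm n (le_of_lt hn)) (hφm n (le_of_lt hn) hxm)
      · exact HasFDerivWithinAt.of_notMem_closure
          (by rwa [hImdef, IsClosed.closure_eq isClosed_Icc])
    · by_cases hxp : x ∈ Ip
      · have hdiff : DifferentiableWithinAt ℝ (iteratedDerivWithin n f Ip) Ip x :=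
          hf.1.differentiableOn_iteratedDerivWithin
            (by exact_mod_cast lt_of_lt_of_le hn hs) hudp x hxp
        have h1 : HasDerivWithinAt (iteratedDerivWithin n f Ip)
            (iteratedDerivWithin (n+1) f Ip x) Ip x := by
          have h2 := hdiff.hasDerivWithinAt
          rwa [← iteratedDerivWithin_succ] at h2
        have e := hφp (n+1) hxp
        rw [e]
        exact h1.congr (hφp n) (hφp n hxp)
      · exact HasFDerivWithinAt.of_notMem_closure
          (by rwa [hIpdef, IsClosed.closure_eq isClosed_Icc])
  -- identification of iterated derivatives of the glued function
  have hDeq : ∀ n, n ≤ s →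
      Set.EqOn (iteratedDerivWithin n (extCont f g) I) (φ n) I := by
    intro n
    induction n with
    | zero =>
        intro _ x hx
        rw [iteratedDerivWithin_zero, hφ0 x]
    | succ n ih =>
        intro hn x hx
        have hns : n ≤ s := le_of_lt (Nat.lt_of_succ_le hn)
        rw [iteratedDerivWithin_succ,
          derivWithin_congr (ih hns) (ih hns hx),
          (hder n (Nat.lt_of_succ_le hn) x hx).derivWithin (hudI x hx)]
  -- Lipschitz bound for the glued derivative of order s
  obtain ⟨Kf, hKf⟩ := myCr1_lip one_pos hf.1 hf.2 hs
  have hgLipR : ∃ K : NNReal, LipschitzOnWith K (iteratedDerivWithin r g Im) Im := by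
    choose K0 hK0 using fun m : Fin (r+1) => (hL0 (m:ℕ) (hmemr m)).2
    choose K1 hK1 using fun m : Fin (r+1) => (hL1 (m:ℕ) (hmemr m)).2
    refine ⟨(∑ m : Fin (r+1), ‖Fh 0 m‖₊ * K0 m) + ∑ m : Fin (r+1), ‖Fh 1 m‖₊ * K1 m,
      myLip_congr (u := fun x =>
        (∑ m : Fin (r+1), Fh 0 m * iteratedDerivWithin r (L0 (m:ℕ)) Im x)
        + ∑ m : Fin (r+1), Fh 1 m * iteratedDerivWithin r (L1 (m:ℕ)) Im x)
      (myLip_add ?_ ?_) ?_⟩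
    · exact myLip_sum Finset.univ _ _ fun m _ => myLip_const_mul (Fh 0 m) (hK0 m)
    · exact myLip_sum Finset.univ _ _ fun m _ => myLip_const_mul (Fh 1 m) (hK1 m)
    · intro x hx
      exact hgD r le_rfl x hx
  obtain ⟨Kg, hKg⟩ := myCr1_lip hb0 hgC hgLipR hs
  have hlipφ : LipschitzOnWith (Kg + Kf) (φ s) I := by
    rw [hIdef]
    exact myLip_glue hKg hKf (key0 s le_rfl).symm
  have hlipAll : LipschitzOnWith (Kg + Kf)
      (iteratedDerivWithin s (extCont f g) I) I :=
    myLip_congr hlipφ (hDeq s le_rfl)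
  refine ⟨?_, ⟨Kg + Kf, hlipAll⟩, ?_⟩
  · rw [contDiffOn_nat_iff_continuousOn_differentiableOn_deriv hudI]
    constructor
    · intro m hm
      rcases eq_or_lt_of_le hm with rfl | hlt
      · exact hlipAll.continuousOn
      · have hdo : DifferentiableOn ℝ (iteratedDerivWithin m (extCont f g) I) I :=
          fun x hx => ((hder m hlt x hx).differentiableWithinAt).congr
            (fun y hy => hDeq m (le_of_lt hlt) hy) (hDeq m (le_of_lt hlt) hx)
        exact hdo.continuousOn
    · intro m hlt
      exact fun x hx => ((hder m hlt x hx).differentiableWithinAt).congr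
        (fun y hy => hDeq m (le_of_lt hlt) hy) (hDeq m (le_of_lt hlt) hx)
  · intro ℓ hℓ
    have hbmem : (1-b:ℝ) ∈ I := ⟨le_rfl, le_of_lt hbI⟩
    have h1mem : (1:ℝ) ∈ I := ⟨le_of_lt hbI, le_rfl⟩
    rw [hDeq ℓ hℓ hbmem, hDeq ℓ hℓ h1mem]
    have e1 : φ ℓ (1-b) = iteratedDerivWithin ℓ g Im (1-b) := if_neg (by linarith)
    have e2 : φ ℓ 1 = iteratedDerivWithin ℓ f Ip 1 := if_pos zero_le_one
    rw [e1, e2, keyb ℓ hℓ]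
end
end

section
/- Let r ≥ 0 be an integer. For all integers 0 ≤ ℓ ≤ r and 0 ≤ m ≤ r, the ℓ-th derivative of P_m^0 satisfies (P_m^0)^{(ℓ)}(−1) = 0 and (P_m^0)^{(ℓ)}(0) = δ_{ℓm} (equal to 1 if ℓ = m and 0 otherwise). -/
open Real Set

noncomputable section

/-- The Hermite basis polynomial
`P_m^0(x) = (1/m!) x^m (1+x)^{r+1} ∑_{n=0}^{r-m} (-x)^n C(r+n, n)`. -/
def P0 (r m : ℕ) (x : ℝ) : ℝ :=
  (1 / (Nat.factorial m) : ℝ) * x ^ m * (1 + x) ^ (r + 1) *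
    ∑ n ∈ Finset.range (r - m + 1), (-x) ^ n * (Nat.choose (r + n) n : ℝ)

/-- The Hermite basis polynomial
`P_m^1(x) = (1/m!) (1+x)^m (-x)^{r+1} ∑_{n=0}^{r-m} (1+x)^n C(r+n, n)`. -/
def P1 (r m : ℕ) (x : ℝ) : ℝ :=
  (1 / (Nat.factorial m) : ℝ) * (1 + x) ^ m * (-x) ^ (r + 1) *
    ∑ n ∈ Finset.range (r - m + 1), (1 + x) ^ n * (Nat.choose (r + n) n : ℝ)

/-- The two-point Hermite interpolation polynomial `P_r(F̂)` of a boundary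
data matrix `F̂`. -/
def Pmat (r : ℕ) (A : Fin 2 → Fin (r + 1) → ℝ) (x : ℝ) : ℝ :=
  ∑ m : Fin (r + 1), A 0 m * P0 r (m : ℕ) x + ∑ m : Fin (r + 1), A 1 m * P1 r (m : ℕ) x

/-- The max-norm of a `2 × (r+1)` matrix. -/
def maxNorm {r : ℕ} (A : Fin 2 → Fin (r + 1) → ℝ) : ℝ :=
  Finset.univ.sup' Finset.univ_nonempty (fun p : Fin 2 × Fin (r + 1) => |A p.1 p.2|)

namespace P0aux
open Polynomial

lemma ps_key (r : ℕ) :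
    (1 + PowerSeries.X : PowerSeries ℝ) ^ (r + 1) *
      PowerSeries.mk (fun n => (-1 : ℝ) ^ n * ((r + n).choose n : ℝ)) = 1 := by
  have h2 : ((1 - PowerSeries.X : PowerSeries ℝ)) ^ (r + 1) *
      PowerSeries.mk (fun n => ((r + n).choose r : ℝ)) = 1 := by
    have h := (PowerSeries.invOneSubPow ℝ (r + 1)).inv_val
    rwa [PowerSeries.invOneSubPow_inv_eq_one_sub_pow,
      PowerSeries.invOneSubPow_val_succ_eq_mk_add_choose] at h
  have h3 := congrArg (PowerSeries.rescale (-1 : ℝ)) h2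
  rw [map_mul, map_pow, map_sub, map_one, PowerSeries.rescale_X,
    PowerSeries.rescale_mk] at h3
  simp only [map_neg, map_one, neg_one_mul, sub_neg_eq_add] at h3
  convert h3 using 4 with n
  congr 1
  rw [← Nat.choose_symm (by omega : n ≤ r + n), show r + n - n = r from by omega]

def Spoly (r m : ℕ) : ℝ[X] :=
  ∑ n ∈ Finset.range (r - m + 1), (-X) ^ n * C ((r + n).choose n : ℝ)

lemma Spoly_coeff (r m j : ℕ) :
    (Spoly r m).coeff j =
      if j ≤ r - m then (-1 : ℝ) ^ j * ((r + j).choose j : ℝ) else 0 := by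
  have he : ∀ n : ℕ, ((-X : ℝ[X]) ^ n * C ((r + n).choose n : ℝ))
      = C ((-1 : ℝ) ^ n * ((r + n).choose n : ℝ)) * X ^ n := by
    intro n
    rw [neg_pow, map_mul, ← C_1, ← C_neg, ← C_pow]
    ring
  rw [Spoly, finset_sum_coeff]
  simp_rw [he, coeff_C_mul_X_pow]
  simp_rw [eq_comm (a := j)]
  rw [Finset.sum_ite_eq' (Finset.range (r - m + 1)) j]
  simp [Finset.mem_range, Nat.lt_succ_iff]

lemma prod_coeff (r m k : ℕ) (hk : k ≤ r - m) :
    ((1 + X : ℝ[X]) ^ (r + 1) * Spoly r m).coeff k = if k = 0 then 1 else 0 := by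
  have hF := ps_key r
  have h1 : ((1 + X : ℝ[X]) ^ (r + 1) * Spoly r m).coeff k
      = ∑ p ∈ Finset.HasAntidiagonal.antidiagonal k,
          ((1 + X : ℝ[X]) ^ (r + 1)).coeff p.1 * (Spoly r m).coeff p.2 :=
    Polynomial.coeff_mul _ _ _
  have h2 : (PowerSeries.coeff k) ((1 + PowerSeries.X : PowerSeries ℝ) ^ (r + 1) *
        PowerSeries.mk (fun n => (-1 : ℝ) ^ n * ((r + n).choose n : ℝ)))
      = ∑ p ∈ Finset.HasAntidiagonal.antidiagonal k,
          (PowerSeries.coeff p.1) ((1 + PowerSeries.X : PowerSeries ℝ) ^ (r + 1)) *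
            ((-1 : ℝ) ^ p.2 * ((r + p.2).choose p.2 : ℝ)) := by
    rw [PowerSeries.coeff_mul]
    simp [PowerSeries.coeff_mk]
  have hcast : ∀ i : ℕ, (PowerSeries.coeff i) ((1 + PowerSeries.X : PowerSeries ℝ) ^ (r + 1))
      = ((1 + X : ℝ[X]) ^ (r + 1)).coeff i := by
    intro i
    rw [show ((1 + PowerSeries.X : PowerSeries ℝ)) = ((1 + X : ℝ[X]) : PowerSeries ℝ) by
      rw [Polynomial.coe_add, Polynomial.coe_one, Polynomial.coe_X], ← Polynomial.coe_pow,
      Polynomial.coeff_coe]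
  rw [h1]
  have : ∑ p ∈ Finset.HasAntidiagonal.antidiagonal k,
      ((1 + X : ℝ[X]) ^ (r + 1)).coeff p.1 * (Spoly r m).coeff p.2
      = ∑ p ∈ Finset.HasAntidiagonal.antidiagonal k,
          (PowerSeries.coeff p.1) ((1 + PowerSeries.X : PowerSeries ℝ) ^ (r + 1)) *
            ((-1 : ℝ) ^ p.2 * ((r + p.2).choose p.2 : ℝ)) := by
    refine Finset.sum_congr rfl fun p hp => ?_
    rw [Finset.HasAntidiagonal.mem_antidiagonal] at hp
    rw [hcast p.1, Spoly_coeff, if_pos (by omega : p.2 ≤ r - m)]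
  rw [this, ← h2, hF]
  simp [PowerSeries.coeff_one]

/-- The polynomial representing `P0 r m`. -/
def Qpoly (r m : ℕ) : ℝ[X] :=
  C (1 / (Nat.factorial m) : ℝ) * X ^ m * (1 + X) ^ (r + 1) * Spoly r m

lemma P0_eq (r m : ℕ) : P0 r m = fun x => (Qpoly r m).eval x := by
  funext x
  simp [P0, Qpoly, Spoly, eval_finset_sum]

lemma iteratedDeriv_poly (p : ℝ[X]) (ℓ : ℕ) :
    iteratedDeriv ℓ (fun x => p.eval x) = fun x => (derivative^[ℓ] p).eval x := by
  induction ℓ generalizing p with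
  | zero => simp
  | succ n ih =>
    rw [iteratedDeriv_succ', Function.iterate_succ_apply]
    rw [show deriv (fun x => p.eval x) = fun x => (derivative p).eval x from
      funext fun x => Polynomial.deriv p]
    exact ih (derivative p)

lemma Qpoly_coeff (r m ℓ : ℕ) (hm : m ≤ r) (hℓ : ℓ ≤ r) :
    (Qpoly r m).coeff ℓ = if ℓ = m then (1 / (Nat.factorial m) : ℝ) else 0 := by
  have : Qpoly r m = C (1 / (Nat.factorial m) : ℝ) * ((1 + X) ^ (r + 1) * Spoly r m) * X ^ m := by
    rw [Qpoly]; ring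
  rw [this, coeff_mul_X_pow']
  by_cases h : m ≤ ℓ
  · rw [if_pos h, coeff_C_mul, prod_coeff r m (ℓ - m) (by omega)]
    by_cases h2 : ℓ = m
    · simp [h2]
    · rw [if_neg (by omega), if_neg h2, mul_zero]
  · rw [if_neg h, if_neg (by omega)]

end P0aux

/-- Interpolation properties of `P_m^0`: for `0 ≤ ℓ, m ≤ r`,
`(P_m^0)^{(ℓ)}(-1) = 0` and `(P_m^0)^{(ℓ)}(0) = δ_{ℓm}`. -/
theorem P0_interpolation (r m ℓ : ℕ) (hm : m ≤ r) (hℓ : ℓ ≤ r) :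
    iteratedDeriv ℓ (P0 r m) (-1) = 0 ∧
    iteratedDeriv ℓ (P0 r m) 0 = if ℓ = m then 1 else 0 := by
  open Polynomial P0aux in
  rw [P0_eq, iteratedDeriv_poly]
  constructor
  · -- value at -1
    have hdvd : (X + 1 : ℝ[X]) ^ (r + 1) ∣ Qpoly r m := by
      refine ⟨C (1 / (Nat.factorial m) : ℝ) * X ^ m * Spoly r m, ?_⟩
      rw [Qpoly]; ring
    have h2 : (X + 1 : ℝ[X]) ^ (r + 1 - ℓ) ∣ derivative^[ℓ] (Qpoly r m) :=
      Polynomial.pow_sub_dvd_iterate_derivative_of_pow_dvd ℓ hdvd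
    obtain ⟨t, ht⟩ := h2
    simp only []
    rw [ht, eval_mul, eval_pow, eval_add, eval_X, eval_one]
    rw [show (-1 : ℝ) + 1 = 0 by ring, zero_pow (by omega), zero_mul]
  · -- value at 0
    simp only []
    rw [← Polynomial.coeff_zero_eq_eval_zero, Polynomial.coeff_iterate_derivative,
      Nat.zero_add, Nat.descFactorial_self, P0aux.Qpoly_coeff r m ℓ hm hℓ]
    by_cases h : ℓ = m
    · subst h
      rw [if_pos rfl, if_pos rfl, nsmul_eq_mul]
      field_simp
    · simp [h]
end
end

section
/- Let r ≥ 0 be an integer. For all integers 0 ≤ ℓ ≤ r and 0 ≤ m ≤ r, the ℓ-th derivative of P_m^1 satisfies (P_m^1)^{(ℓ)}(0) = 0 and (P_m^1)^{(ℓ)}(−1) = δ_{ℓm} (equal to 1 if ℓ = m and 0 otherwise). -/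
open Real Set

noncomputable section

open Polynomial

/-- Auxiliary truncated series polynomial. -/
def Sp (r N : ℕ) : Polynomial ℝ :=
  ∑ n ∈ Finset.range (N + 1), X ^ n * C ((Nat.choose (r + n) n : ℝ))

lemma Sp_coeff (r N k : ℕ) (hk : k ≤ N) : (Sp r N).coeff k = ((r + k).choose r : ℝ) := by
  have hsymm : (r + k).choose k = (r + k).choose r := by
    rw [← Nat.choose_symm (Nat.le_add_left k r), Nat.add_sub_cancel]
  simp [Sp, finset_sum_coeff, coeff_mul_C, coeff_X_pow, Finset.sum_ite_eq,
    Nat.lt_succ_of_le hk, hsymm]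

lemma coeff_G (r N j : ℕ) (hj : j ≤ N) :
    ((1 - X : Polynomial ℝ) ^ (r + 1) * Sp r N).coeff j = if j = 0 then 1 else 0 := by
  set B : PowerSeries ℝ := PowerSeries.mk fun n => ((r + n).choose r : ℝ) with hB
  have hDB : B * (1 - PowerSeries.X) ^ (r + 1) = 1 := by
    rw [hB, show (PowerSeries.mk fun n => ((r + n).choose r : ℝ)) =
        PowerSeries.mk fun n => (Nat.choose (r + n) r : ℝ) from rfl,
      ← PowerSeries.mk_one_pow_eq_mk_choose_add, ← mul_pow,
      PowerSeries.mk_one_mul_one_sub_eq_one, one_pow]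
  have hcoe : ((1 - X : Polynomial ℝ) ^ (r + 1) * Sp r N).coeff j
      = PowerSeries.coeff j ((1 - PowerSeries.X) ^ (r + 1) * (Sp r N : PowerSeries ℝ)) := by
    rw [← Polynomial.coeff_coe, Polynomial.coe_mul, Polynomial.coe_pow, Polynomial.coe_sub,
      Polynomial.coe_one, Polynomial.coe_X]
  have hzero : PowerSeries.coeff j
      ((1 - PowerSeries.X) ^ (r + 1) * (B - (Sp r N : PowerSeries ℝ))) = 0 := by
    rw [PowerSeries.coeff_mul]
    apply Finset.sum_eq_zero
    intro p hp
    have hp2 : p.2 ≤ j := by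
      rw [Finset.HasAntidiagonal.mem_antidiagonal] at hp
      omega
    have : PowerSeries.coeff p.2 (B - (Sp r N : PowerSeries ℝ)) = 0 := by
      rw [map_sub, Polynomial.coeff_coe, Sp_coeff r N p.2 (le_trans hp2 hj), hB,
        PowerSeries.coeff_mk, sub_self]
    rw [this, mul_zero]
  have : PowerSeries.coeff j ((1 - PowerSeries.X) ^ (r + 1) * (Sp r N : PowerSeries ℝ))
      = PowerSeries.coeff j ((1 - PowerSeries.X) ^ (r + 1) * B) := by
    have hsplit : (1 - PowerSeries.X) ^ (r + 1) * (Sp r N : PowerSeries ℝ)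
        = (1 - PowerSeries.X) ^ (r + 1) * B
          - (1 - PowerSeries.X) ^ (r + 1) * (B - (Sp r N : PowerSeries ℝ)) := by ring
    rw [hsplit, map_sub, hzero, sub_zero]
  rw [hcoe, this, mul_comm, hDB, PowerSeries.coeff_one]

/-- The polynomial realizing `P1 r m`. -/
def p1poly (r m : ℕ) : Polynomial ℝ :=
  C ((Nat.factorial m : ℝ)⁻¹) * (1 + X) ^ m * (-X) ^ (r + 1) *
    ∑ n ∈ Finset.range (r - m + 1), (1 + X) ^ n * C ((Nat.choose (r + n) n : ℝ))

lemma p1poly_eval (r m : ℕ) (x : ℝ) : (p1poly r m).eval x = P1 r m x := by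
  simp [p1poly, P1, Polynomial.eval_finset_sum, one_div]

lemma iteratedDeriv_polyEval (p : Polynomial ℝ) (n : ℕ) :
    iteratedDeriv n (fun x => p.eval x) = fun x => (derivative^[n] p).eval x := by
  induction n with
  | zero => simp
  | succ n ih =>
    rw [iteratedDeriv_succ, ih, Function.iterate_succ_apply']
    funext x
    exact Polynomial.deriv _

lemma taylor_pow' (r : ℝ) (p : Polynomial ℝ) (k : ℕ) :
    taylor r (p ^ k) = (taylor r p) ^ k := by
  simp [taylor_apply, pow_comp]

lemma htaylor (r m : ℕ) : taylor (-1 : ℝ) (p1poly r m) =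
    C ((Nat.factorial m : ℝ)⁻¹) * X ^ m * (1 - X) ^ (r + 1) * Sp r (r - m) := by
  have h1 : taylor (-1 : ℝ) (1 + X) = X := by
    rw [map_add, taylor_one, taylor_X]
    simp
  have h2 : taylor (-1 : ℝ) (-X : Polynomial ℝ) = 1 - X := by
    rw [map_neg, taylor_X]
    simp [sub_eq_add_neg]
  rw [p1poly, taylor_mul, taylor_mul, taylor_mul, taylor_C, taylor_pow', taylor_pow', h1, h2,
    map_sum, Sp]
  congr 1
  apply Finset.sum_congr rfl
  intro n _
  rw [taylor_mul, taylor_pow', h1, taylor_C]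

/-- Interpolation properties of `P_m^1`: for `0 ≤ ℓ, m ≤ r`,
`(P_m^1)^{(ℓ)}(0) = 0` and `(P_m^1)^{(ℓ)}(-1) = δ_{ℓm}`. -/
theorem P1_interpolation (r m ℓ : ℕ) (hm : m ≤ r) (hℓ : ℓ ≤ r) :
    iteratedDeriv ℓ (P1 r m) 0 = 0 ∧
    iteratedDeriv ℓ (P1 r m) (-1) = if ℓ = m then 1 else 0 := by
  have hfun : P1 r m = fun x => (p1poly r m).eval x :=
    funext fun x => (p1poly_eval r m x).symm
  rw [hfun, iteratedDeriv_polyEval]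
  simp only []
  constructor
  · -- value at 0
    rw [← Polynomial.coeff_zero_eq_eval_zero, Polynomial.coeff_iterate_derivative]
    have hfac : p1poly r m = (C ((Nat.factorial m : ℝ)⁻¹) * (1 + X) ^ m * (-1 : Polynomial ℝ) ^ (r + 1) *
        ∑ n ∈ Finset.range (r - m + 1), (1 + X) ^ n * C ((Nat.choose (r + n) n : ℝ))) * X ^ (r + 1) := by
      rw [p1poly]; ring
    have hc : (p1poly r m).coeff (0 + ℓ) = 0 := by
      have h' : ¬ (r + 1 ≤ 0 + ℓ) := by omega
      rw [hfac, Polynomial.coeff_mul_X_pow', if_neg h']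
    rw [hc, smul_zero]
  · -- value at -1
    have hHD : (derivative^[ℓ] (p1poly r m)).eval (-1)
        = (Nat.factorial ℓ : ℝ) * (taylor (-1 : ℝ) (p1poly r m)).coeff ℓ := by
      have h := congrFun (Polynomial.factorial_smul_hasseDeriv (R := ℝ) ℓ) (p1poly r m)
      rw [← h]
      rw [Polynomial.taylor_coeff]
      simp [mul_comm]
    rw [hHD, htaylor]
    rw [mul_assoc, mul_assoc, Polynomial.coeff_C_mul]
    rw [show (X : Polynomial ℝ) ^ m * ((1 - X) ^ (r + 1) * Sp r (r - m))
        = ((1 - X) ^ (r + 1) * Sp r (r - m)) * X ^ m from by ring,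
      Polynomial.coeff_mul_X_pow']
    by_cases hle : m ≤ ℓ
    · have hG := coeff_G r (r - m) (ℓ - m) (by omega)
      rw [if_pos hle, hG]
      by_cases heq : ℓ = m
      · subst heq
        simp [Nat.sub_self]
        field_simp
      · have : ¬ (ℓ - m = 0) := by omega
        simp [this, heq]
    · have : ¬ (ℓ = m) := by omega
      simp [hle, this]

end
end
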